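/- The sequence of Baxter numbers B_n is log-convex: for all n ≥ 2, B_n^2 ≤ B_{n-1} * B_{n+1}. -/

import Mathlib

open Finset

/-- The Baxter numbers. -/
def baxter (n : ℕ) : ℚ :=
  ∑ k ∈ Finset.Icc 1 n,
    2 / ((n : ℚ) * ((n : ℚ) + 1) ^ 2) * ((n + 1).choose (k - 1) : ℚ) *
      ((n + 1).choose k : ℚ) * ((n + 1).choose (k + 1) : ℚ)

/-- summand (without prefactor) -/
def bT (n k : ℕ) : ℚ :=
  ((n + 1).choose (k - 1) : ℚ) * ((n + 1).choose k : ℚ) * ((n + 1).choose (k + 1) : ℚ)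

/-- certificate polynomial -/
def bQ (n k : ℕ) : ℚ :=
  (14*(n:ℚ)^2+88*n+134)*((n:ℚ)+2)*k - (27*(n:ℚ)^2+147*n+194)*(k:ℚ)^2
    - (14*(n:ℚ)^3+116*(n:ℚ)^2+292*n+220)*(k:ℚ)^3 + (27*(n:ℚ)^2+147*n+190)*(k:ℚ)^4
    - (18*(n:ℚ)+48)*(k:ℚ)^5 + 4*(k:ℚ)^6

def bG (n k : ℕ) : ℚ := bQ n k * bT (n+2) k / (((n:ℚ)+2)*((n:ℚ)+3))

def bL (n k : ℕ) : ℚ :=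
  ((n:ℚ)+1)*((n:ℚ)+2)*((n:ℚ)+4)*((n:ℚ)+5) * bT (n+2) k
    - ((n:ℚ)+3)^2*(7*(n:ℚ)^2+35*n+40) * bT (n+1) k
    - 8*((n:ℚ)+2)^2*((n:ℚ)+3)^2 * bT n k

lemma cast_choose_succ_right (m j : ℕ) :
    (m.choose (j+1) : ℚ) * ((j:ℚ)+1) = (m.choose j : ℚ) * ((m:ℚ) - (j:ℚ)) := by
  rcases le_or_gt j m with h | h
  · have h0 := congrArg (Nat.cast : ℕ → ℚ) (Nat.choose_succ_right_eq m j)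
    push_cast [Nat.cast_sub h] at h0
    linarith
  · have h1 : m.choose (j+1) = 0 := Nat.choose_eq_zero_of_lt (by omega)
    have h2 : m.choose j = 0 := Nat.choose_eq_zero_of_lt h
    simp [h1, h2]

lemma cast_choose_col (m j : ℕ) :
    ((m+1).choose j : ℚ) * (((m:ℚ)+1) - (j:ℚ)) = (m.choose j : ℚ) * ((m:ℚ)+1) := by
  rcases le_or_gt j (m+1) with h | h
  · have h0 := congrArg (Nat.cast : ℕ → ℚ) (Nat.choose_mul_succ_eq m j)
    push_cast [Nat.cast_sub h] at h0
    linarith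
  · have h1 : (m+1).choose j = 0 := Nat.choose_eq_zero_of_lt h
    have h2 : m.choose j = 0 := Nat.choose_eq_zero_of_lt (by omega)
    simp [h1, h2]

set_option maxHeartbeats 1600000 in
lemma localId (n j : ℕ) : bL n (j+1) = bG n (j+2) - bG n (j+1) := by
  have hj1 : ((j:ℚ)+1) ≠ 0 := by positivity
  have hj2 : ((j:ℚ)+2) ≠ 0 := by positivity
  have hj3 : ((j:ℚ)+3) ≠ 0 := by positivity
  have hn2 : ((n:ℚ)+2) ≠ 0 := by positivity
  have hn3 : ((n:ℚ)+3) ≠ 0 := by positivity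
  set a0 : ℚ := ((n+3).choose j : ℚ) with ha0def
  set a1 : ℚ := ((n+3).choose (j+1) : ℚ) with ha1def
  set a2 : ℚ := ((n+3).choose (j+2) : ℚ) with ha2def
  set a3 : ℚ := ((n+3).choose (j+3) : ℚ) with ha3def
  set b0 : ℚ := ((n+2).choose j : ℚ) with hb0def
  set b1 : ℚ := ((n+2).choose (j+1) : ℚ) with hb1def
  set b2 : ℚ := ((n+2).choose (j+2) : ℚ) with hb2def
  set c0 : ℚ := ((n+1).choose j : ℚ) with hc0def
  set c1 : ℚ := ((n+1).choose (j+1) : ℚ) with hc1def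
  set c2 : ℚ := ((n+1).choose (j+2) : ℚ) with hc2def
  have ea1 : a1 * ((j:ℚ)+1) = a0 * (((n:ℚ)+3) - j) := by
    rw [ha1def, ha0def]; exact_mod_cast cast_choose_succ_right (n+3) j
  have ea2 : a2 * ((j:ℚ)+2) = a1 * (((n:ℚ)+2) - j) := by
    have h := cast_choose_succ_right (n+3) (j+1)
    push_cast at h; rw [ha2def, ha1def]; push_cast; linarith
  have ea3 : a3 * ((j:ℚ)+3) = a2 * (((n:ℚ)+1) - j) := by
    have h := cast_choose_succ_right (n+3) (j+2)
    push_cast at h; rw [ha3def, ha2def]; push_cast; linarith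
  have eb0 : b0 * ((n:ℚ)+3) = a0 * (((n:ℚ)+3) - j) := by
    have h := cast_choose_col (n+2) j
    push_cast at h; rw [hb0def, ha0def]; push_cast; linarith
  have eb1 : b1 * ((n:ℚ)+3) = a1 * (((n:ℚ)+2) - j) := by
    have h := cast_choose_col (n+2) (j+1)
    push_cast at h; rw [hb1def, ha1def]; push_cast; linarith
  have eb2 : b2 * ((n:ℚ)+3) = a2 * (((n:ℚ)+1) - j) := by
    have h := cast_choose_col (n+2) (j+2)
    push_cast at h; rw [hb2def, ha2def]; push_cast; linarith
  have ec0 : c0 * ((n:ℚ)+2) = b0 * (((n:ℚ)+2) - j) := by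
    have h := cast_choose_col (n+1) j
    push_cast at h; rw [hc0def, hb0def]; push_cast; linarith
  have ec1 : c1 * ((n:ℚ)+2) = b1 * (((n:ℚ)+1) - j) := by
    have h := cast_choose_col (n+1) (j+1)
    push_cast at h; rw [hc1def, hb1def]; push_cast; linarith
  have ec2 : c2 * ((n:ℚ)+2) = b2 * ((n:ℚ) - j) := by
    have h := cast_choose_col (n+1) (j+2)
    push_cast at h; rw [hc2def, hb2def]; push_cast; linarith
  have fa1 : a1 = a0 * (((n:ℚ)+3) - j) / ((j:ℚ)+1) := by rw [eq_div_iff hj1]; linarith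
  have fa2 : a2 = a1 * (((n:ℚ)+2) - j) / ((j:ℚ)+2) := by rw [eq_div_iff hj2]; linarith
  have fa3 : a3 = a2 * (((n:ℚ)+1) - j) / ((j:ℚ)+3) := by rw [eq_div_iff hj3]; linarith
  have fb0 : b0 = a0 * (((n:ℚ)+3) - j) / ((n:ℚ)+3) := by rw [eq_div_iff hn3]; linarith
  have fb1 : b1 = a1 * (((n:ℚ)+2) - j) / ((n:ℚ)+3) := by rw [eq_div_iff hn3]; linarith
  have fb2 : b2 = a2 * (((n:ℚ)+1) - j) / ((n:ℚ)+3) := by rw [eq_div_iff hn3]; linarith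
  have fc0 : c0 = b0 * (((n:ℚ)+2) - j) / ((n:ℚ)+2) := by rw [eq_div_iff hn2]; linarith
  have fc1 : c1 = b1 * (((n:ℚ)+1) - j) / ((n:ℚ)+2) := by rw [eq_div_iff hn2]; linarith
  have fc2 : c2 = b2 * ((n:ℚ) - j) / ((n:ℚ)+2) := by rw [eq_div_iff hn2]; linarith
  have hT2 : bT (n+2) (j+1) = a0 * a1 * a2 := by
    rw [bT, ha0def, ha1def, ha2def]; norm_num
  have hT2' : bT (n+2) (j+2) = a1 * a2 * a3 := by
    rw [bT, ha1def, ha2def, ha3def]; norm_num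
  have hT1 : bT (n+1) (j+1) = b0 * b1 * b2 := by
    rw [bT, hb0def, hb1def, hb2def]; norm_num
  have hT0 : bT n (j+1) = c0 * c1 * c2 := by
    rw [bT, hc0def, hc1def, hc2def]; norm_num
  have E2 : bT (n+2) (j+1)
      = (((n:ℚ)+3)-j)^2*(((n:ℚ)+2)-j) * a0^3 / (((j:ℚ)+1)^2*((j:ℚ)+2)) := by
    rw [hT2, fa2, fa1]; field_simp
  have E2' : bT (n+2) (j+2)
      = (((n:ℚ)+3)-j)^3*(((n:ℚ)+2)-j)^2*(((n:ℚ)+1)-j) * a0^3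
        / (((j:ℚ)+1)^3*((j:ℚ)+2)^2*((j:ℚ)+3)) := by
    rw [hT2', fa3, fa2, fa1]; field_simp
  have E1 : bT (n+1) (j+1)
      = (((n:ℚ)+3)-j)^3*(((n:ℚ)+2)-j)^2*(((n:ℚ)+1)-j) * a0^3
        / (((n:ℚ)+3)^3*(((j:ℚ)+1)^2*((j:ℚ)+2))) := by
    rw [hT1, fb2, fb1, fb0, fa2, fa1]; field_simp
  have E0 : bT n (j+1)
      = (((n:ℚ)+3)-j)^3*(((n:ℚ)+2)-j)^3*(((n:ℚ)+1)-j)^2*((n:ℚ)-j) * a0^3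
        / (((n:ℚ)+2)^3*((n:ℚ)+3)^3*(((j:ℚ)+1)^2*((j:ℚ)+2))) := by
    rw [hT0, fc2, fc1, fc0, fb2, fb1, fb0, fa2, fa1]; field_simp
  rw [bL, bG, bG, E2, E2', E1, E0, bQ, bQ]
  push_cast
  field_simp
  ring

lemma bQ_one (n : ℕ) : bQ n 1 = 0 := by
  rw [bQ]; push_cast; ring

lemma bT_big (n k : ℕ) (h : n < k) : bT n k = 0 := by
  have : (n+1).choose (k+1) = 0 := Nat.choose_eq_zero_of_lt (by omega)
  simp [bT, this]

lemma tele (n : ℕ) : ∑ k ∈ Finset.Icc 1 (n+3), bL n k = 0 := by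
  rw [← Finset.Ico_add_one_right_eq_Icc, Finset.sum_Ico_eq_sum_range]
  rw [show n + 3 + 1 - 1 = n + 3 from rfl]
  have : ∀ i ∈ Finset.range (n+3), bL n (1+i) = bG n (i+1+1) - bG n (i+1) := by
    intro i _
    rw [add_comm 1 i]
    exact localId n i
  rw [Finset.sum_congr rfl this, Finset.sum_range_sub (fun i => bG n (i+1)) (n+3)]
  have h1 : bG n (0+1) = 0 := by
    have := bQ_one n
    simp [bG, this]
  have h2 : bG n (n+3+1) = 0 := by
    have hz : bT (n+2) (n+3+1) = 0 := bT_big _ _ (by omega)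
    simp [bG, hz]
  rw [h1, h2]; ring

lemma Ssum (n : ℕ) :
    ((n:ℚ)+1)*((n:ℚ)+2)*((n:ℚ)+4)*((n:ℚ)+5) * ∑ k ∈ Finset.Icc 1 (n+3), bT (n+2) k
      = ((n:ℚ)+3)^2*(7*(n:ℚ)^2+35*n+40) * ∑ k ∈ Finset.Icc 1 (n+3), bT (n+1) k
        + 8*((n:ℚ)+2)^2*((n:ℚ)+3)^2 * ∑ k ∈ Finset.Icc 1 (n+3), bT n k := by
  have h := tele n
  simp only [bL, Finset.sum_sub_distrib, ← Finset.mul_sum] at h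
  linarith

lemma shrink (n M : ℕ) (h : n ≤ M) :
    ∑ k ∈ Finset.Icc 1 M, bT n k = ∑ k ∈ Finset.Icc 1 n, bT n k := by
  refine (Finset.sum_subset (Finset.Icc_subset_Icc_right h) ?_).symm
  intro x hx hnx
  simp only [Finset.mem_Icc] at hx hnx
  exact bT_big n x (by omega)

lemma baxter_S (n : ℕ) :
    baxter n = 2/((n:ℚ)*((n:ℚ)+1)^2) * ∑ k ∈ Finset.Icc 1 n, bT n k := by
  rw [baxter, Finset.mul_sum]
  exact Finset.sum_congr rfl fun k _ => by rw [bT]; ring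

lemma brec (n : ℕ) :
    ((n:ℚ)+5)*((n:ℚ)+6)*baxter (n+3)
      = (7*(n:ℚ)^2+49*(n:ℚ)+82)*baxter (n+2) + 8*((n:ℚ)+1)*((n:ℚ)+2)*baxter (n+1) := by
  have hs := Ssum (n+1)
  rw [show n+1+3 = n+4 from rfl, show n+1+2 = n+3 from rfl, show n+1+1 = n+2 from rfl] at hs
  rw [shrink (n+3) (n+4) (by omega), shrink (n+2) (n+4) (by omega),
      shrink (n+1) (n+4) (by omega)] at hs
  push_cast at hs
  have h3 : baxter (n+3) * (((n:ℚ)+3)*((n:ℚ)+4)^2)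
      = 2 * ∑ k ∈ Finset.Icc 1 (n+3), bT (n+3) k := by
    rw [baxter_S (n+3), show ((n+3:ℕ):ℚ) = (n:ℚ)+3 by push_cast; ring,
        show ((n:ℚ)+3+1) = (n:ℚ)+4 by ring, mul_right_comm,
        div_mul_cancel₀ _ (by positivity : ((n:ℚ)+3)*((n:ℚ)+4)^2 ≠ 0)]
  have h2 : baxter (n+2) * (((n:ℚ)+2)*((n:ℚ)+3)^2)
      = 2 * ∑ k ∈ Finset.Icc 1 (n+2), bT (n+2) k := by
    rw [baxter_S (n+2), show ((n+2:ℕ):ℚ) = (n:ℚ)+2 by push_cast; ring,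
        show ((n:ℚ)+2+1) = (n:ℚ)+3 by ring, mul_right_comm,
        div_mul_cancel₀ _ (by positivity : ((n:ℚ)+2)*((n:ℚ)+3)^2 ≠ 0)]
  have h1 : baxter (n+1) * (((n:ℚ)+1)*((n:ℚ)+2)^2)
      = 2 * ∑ k ∈ Finset.Icc 1 (n+1), bT (n+1) k := by
    rw [baxter_S (n+1), show ((n+1:ℕ):ℚ) = (n:ℚ)+1 by push_cast; ring,
        show ((n:ℚ)+1+1) = (n:ℚ)+2 by ring, mul_right_comm,
        div_mul_cancel₀ _ (by positivity : ((n:ℚ)+1)*((n:ℚ)+2)^2 ≠ 0)]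
  have hD : ((n:ℚ)+2)*((n:ℚ)+3)^2*((n:ℚ)+4)^2 ≠ 0 := by positivity
  apply mul_left_cancel₀ hD
  linear_combination ((n:ℚ)+2)*((n:ℚ)+3)*((n:ℚ)+5)*((n:ℚ)+6) * h3
    - ((n:ℚ)+4)^2*(7*(n:ℚ)^2+49*(n:ℚ)+82) * h2
    - 8*((n:ℚ)+3)^2*((n:ℚ)+4)^2 * h1 + 2 * hs

lemma bpos (n : ℕ) (h : 1 ≤ n) : 0 < baxter n := by
  rw [baxter]
  apply Finset.sum_pos'
  · intro k _
    positivity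
  · refine ⟨1, Finset.mem_Icc.2 ⟨le_refl 1, h⟩, ?_⟩
    have hc0 : (0:ℚ) < ((n+1).choose (1-1) : ℚ) := by
      simp
    have hc1 : (0:ℚ) < ((n+1).choose 1 : ℚ) := by
      simp [Nat.choose_one_right]; positivity
    have hc2 : (0:ℚ) < ((n+1).choose (1+1) : ℚ) := by
      have := Nat.choose_pos (show 1+1 ≤ n+1 by omega)
      exact_mod_cast this
    have hn : (0:ℚ) < (n:ℚ) := by exact_mod_cast h
    have hpre : (0:ℚ) < 2/((n:ℚ)*((n:ℚ)+1)^2) := by positivity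
    calc (0:ℚ) < 2/((n:ℚ)*((n:ℚ)+1)^2) * ((n+1).choose (1-1) : ℚ)
        * ((n+1).choose 1 : ℚ) * ((n+1).choose (1+1) : ℚ) := by positivity
      _ = _ := rfl

lemma bx1 : baxter 1 = 1 := by
  rw [baxter]
  norm_num

lemma bx2 : baxter 2 = 2 := by
  rw [baxter]
  rw [show Finset.Icc 1 2 = {1, 2} from rfl]
  norm_num [Nat.choose]

lemma bounds : ∀ j : ℕ,
    8*((j:ℚ)+1)*baxter (j+1) ≤ ((j:ℚ)+5)*baxter (j+2)
      ∧ ((j:ℚ)+6)*baxter (j+2) ≤ 8*((j:ℚ)+2)*baxter (j+1) := by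
  intro j
  induction j with
  | zero =>
    constructor
    · norm_num [bx1, bx2]
    · norm_num [bx1, bx2]
  | succ j ih =>
    obtain ⟨ih1, ih2⟩ := ih
    have e := brec j
    have p1 : 0 < baxter (j+1) := bpos _ (by omega)
    have p2 : 0 < baxter (j+2) := bpos _ (by omega)
    have hj : (0:ℚ) ≤ (j:ℚ) := Nat.cast_nonneg j
    have c1 : (0:ℚ) < (j:ℚ)+5 := by positivity
    have c2 : (0:ℚ) < ((j:ℚ)+5)*((j:ℚ)+6) := by positivity
    constructor
    · -- 8*(j+2)*B₂ ≤ (j+6)*B₃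
      push_cast
      have key : ((j:ℚ)+5)*(8*((j:ℚ)+1+1)*baxter (j+1+1))
          ≤ ((j:ℚ)+5)*(((j:ℚ)+1+5)*baxter (j+1+2)) := by
        have hprod : (0:ℚ) ≤ ((j:ℚ)+1)*(8*((j:ℚ)+2)*baxter (j+1) - ((j:ℚ)+6)*baxter (j+2)) :=
          mul_nonneg (by positivity) (by linarith)
        rw [show j+1+1 = j+2 from rfl, show j+1+2 = j+3 from rfl]
        nlinarith [e, hprod, p2]
      exact le_of_mul_le_mul_left key c1
    · -- (j+7)*B₃ ≤ 8*(j+3)*B₂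
      push_cast
      have e7 : ((j:ℚ)+7)*(((j:ℚ)+5)*((j:ℚ)+6)*baxter (j+3))
          = ((j:ℚ)+7)*((7*(j:ℚ)^2+49*(j:ℚ)+82)*baxter (j+2)
              + 8*((j:ℚ)+1)*((j:ℚ)+2)*baxter (j+1)) := by rw [e]
      have key : (((j:ℚ)+5)*((j:ℚ)+6))*((((j:ℚ)+1)+6)*baxter (j+1+2))
          ≤ (((j:ℚ)+5)*((j:ℚ)+6))*(8*(((j:ℚ)+1)+2)*baxter (j+1+1)) := by
        have hprod : (0:ℚ) ≤ (((j:ℚ)+7)*((j:ℚ)+2))*(((j:ℚ)+5)*baxter (j+2) - 8*((j:ℚ)+1)*baxter (j+1)) :=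
          mul_nonneg (by positivity) (by linarith)
        have hb2 : (0:ℚ) ≤ (j:ℚ)*baxter (j+2) := mul_nonneg hj (le_of_lt p2)
        rw [show j+1+1 = j+2 from rfl, show j+1+2 = j+3 from rfl]
        nlinarith [e7, hprod, hb2, p2]
      exact le_of_mul_le_mul_left key c2

theorem baxter_log_convex (n : ℕ) (hn : 2 ≤ n) :
    (baxter n) ^ 2 ≤ baxter (n - 1) * baxter (n + 1) := by
  obtain ⟨j, rfl⟩ : ∃ j, n = j + 2 := ⟨n - 2, by omega⟩
  have h1 := (bounds j).2
  have h2 := (bounds (j+1)).1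
  push_cast at h2
  rw [show j+1+1 = j+2 from rfl, show j+1+2 = j+3 from rfl] at h2
  have p1 : 0 < baxter (j+1) := bpos _ (by omega)
  have p2 : 0 < baxter (j+2) := bpos _ (by omega)
  have p3 : 0 < baxter (j+3) := bpos _ (by omega)
  rw [show j+2-1 = j+1 from rfl, show j+2+1 = j+3 from rfl]
  have c : (0:ℚ) < (j:ℚ)+6 := by positivity
  have key : ((j:ℚ)+6)*(baxter (j+2)^2) ≤ ((j:ℚ)+6)*(baxter (j+1)*baxter (j+3)) := by
    have m1 := mul_le_mul_of_nonneg_right h1 (le_of_lt p2)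
    have m2 := mul_le_mul_of_nonneg_right h2 (le_of_lt p1)
    nlinarith [m1, m2]
  nlinarith [key, c]
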